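/- Every T₁ space satisfying the decreasing (G) condition is a D-space. -/

import Mathlib

open Set Topology

/-- The core (F) condition for a family `W` assigning to each point a collection of subsets. -/
def FFamilyCondition {X : Type*} [TopologicalSpace X] (W : X → Set (Set X)) : Prop :=
  (∀ x, ∀ w ∈ W x, x ∈ w) ∧
  ∀ x U, IsOpen U → x ∈ U → ∃ V, IsOpen V ∧ x ∈ V ∧
    ∀ y ∈ V, ∃ w ∈ W y, x ∈ w ∧ w ⊆ U

/-- `X` satisfies well-ordered (F): each `W x` is well-ordered by reverse inclusion. -/
def SatisfiesWellOrderedF (X : Type*) [TopologicalSpace X] : Prop :=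
  ∃ W : X → Set (Set X),
    (∀ x, IsWellOrder (W x) (fun A B => (B : Set X) ⊂ (A : Set X))) ∧
    FFamilyCondition W

/-- `X` satisfies chain (F): each `W x` is linearly ordered by (reverse) inclusion. -/
def SatisfiesChainF (X : Type*) [TopologicalSpace X] : Prop :=
  ∃ W : X → Set (Set X),
    (∀ x, IsChain (· ⊆ ·) (W x)) ∧
    FFamilyCondition W

/-- `X` satisfies decreasing (G). -/
def SatisfiesDecreasingG (X : Type*) [TopologicalSpace X] : Prop :=
  ∃ W : X → ℕ → Set X,
    (∀ x k, x ∈ W x k) ∧ (∀ x k, W x (k + 1) ⊆ W x k) ∧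
    ∀ x U, IsOpen U → x ∈ U → ∃ V, IsOpen V ∧ x ∈ V ∧
      ∀ y ∈ V, ∃ m, x ∈ W y m ∧ W y m ⊆ U

universe u_hn

/-- The `H`/`n` characterization with ordinal-valued `n`. -/
def HNAssignment (X : Type u_hn) [TopologicalSpace X] : Prop :=
  ∃ (H : X → Set X → Set X) (n : X → X → Set X → Ordinal.{u_hn}),
    (∀ x U, IsOpen U → x ∈ U → IsOpen (H x U) ∧ x ∈ H x U) ∧
    (∀ a x y U V, IsOpen U → x ∈ U → IsOpen V → y ∈ V →
      a ∈ H x U → a ∈ H y V → n a x U ≤ n a y V → y ∈ U)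

/-- `X` is a D-space: every neighborhood assignment has a closed discrete kernel. -/
def IsDSpace (X : Type*) [TopologicalSpace X] : Prop :=
  ∀ φ : X → Set X, (∀ x, IsOpen (φ x)) → (∀ x, x ∈ φ x) →
    ∃ D : Set X, IsClosed D ∧ DiscreteTopology D ∧ ⋃ d ∈ D, φ d = Set.univ

namespace Stmt7Aux

universe u

open Classical in
/-- "free pick": an uncovered point if one exists, else the default. -/
noncomputable def fp {X : Type u} (x₀ : X) (Gp : Set X) : X :=
  if hun : ∃ y, y ∉ Gp then hun.choose else x₀

theorem fp_not_mem {X : Type u} {x₀ : X} {Gp : Set X} (h : ∃ y, y ∉ Gp) :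
    fp x₀ Gp ∉ Gp := by
  rw [fp, dif_pos h]
  exact h.choose_spec

open Classical in
/-- one step of the recursion: given the region `Gp` covered so far and (optionally) the
point `z` added at the previous stage, add a witness of the least active capture level
of the chain of `z` if there is one, else pick freely. -/
noncomputable def step {X : Type u} (W : X → ℕ → Set X) (φ : X → Set X) (x₀ : X)
    (Gp : Set X) : Option X → X
  | none => fp x₀ Gp
  | some z =>
    if hA : {m : ℕ | ∃ y, y ∉ Gp ∧ y ∈ W z m ∧ W z m ⊆ φ y}.Nonempty then
      (Nat.sInf_mem hA).choose
    else fp x₀ Gp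

theorem step_not_mem {X : Type u} {W : X → ℕ → Set X} {φ : X → Set X} {x₀ : X}
    {Gp : Set X} (h : ∃ y, y ∉ Gp) (oz : Option X) :
    step W φ x₀ Gp oz ∉ Gp := by
  cases oz with
  | none => exact fp_not_mem h
  | some z =>
    rw [step]
    split_ifs with hA
    · exact (Nat.sInf_mem hA).choose_spec.1
    · exact fp_not_mem h

theorem step_capture {X : Type u} {W : X → ℕ → Set X} {φ : X → Set X} {x₀ : X}
    {Gp : Set X} (hdec : ∀ z k, W z (k + 1) ⊆ W z k)
    {z : X} {m : ℕ} {y : X} (hy : y ∉ Gp) (hyW : y ∈ W z m) (hyφ : W z m ⊆ φ y) :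
    W z m ⊆ φ (step W φ x₀ Gp (some z)) := by
  have hA : {m : ℕ | ∃ y, y ∉ Gp ∧ y ∈ W z m ∧ W z m ⊆ φ y}.Nonempty :=
    ⟨m, y, hy, hyW, hyφ⟩
  rw [step, dif_pos hA]
  obtain ⟨-, -, hsub⟩ := (Nat.sInf_mem hA).choose_spec
  have hle : sInf {m : ℕ | ∃ y, y ∉ Gp ∧ y ∈ W z m ∧ W z m ⊆ φ y} ≤ m :=
    Nat.sInf_le ⟨y, hy, hyW, hyφ⟩
  have hanti : Antitone (W z) := antitone_nat_of_succ_le (fun n => hdec z n)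
  exact (hanti hle).trans hsub

theorem lt_add_one' (a : Ordinal.{u}) : a < a + 1 := by
  rw [Ordinal.add_one_eq_succ]
  exact Order.lt_succ _

theorem lt_of_add_one_eq {a b : Ordinal.{u}} (h : a + 1 = b) : a < b :=
  h ▸ lt_add_one' a

variable {X : Type u} (W : X → ℕ → Set X) (φ : X → Set X) (x₀ : X)

open Classical in
/-- the transfinite sequence of chosen points. -/
noncomputable def seq : Ordinal.{u} → X :=
  Ordinal.lt_wf.fix
    (fun α prior =>
      step W φ x₀ (⋃ β, ⋃ h : β < α, φ (prior β h))
        (if hsucc : ∃ δ : Ordinal.{u}, δ + 1 = α then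
          some (prior hsucc.choose (lt_of_add_one_eq hsucc.choose_spec))
        else none))

/-- the region covered by stage `α`. -/
noncomputable def G (α : Ordinal.{u}) : Set X :=
  ⋃ β, ⋃ _h : β < α, φ (seq W φ x₀ β)

open Classical in
theorem seq_eq (α : Ordinal.{u}) :
    seq W φ x₀ α = step W φ x₀ (G W φ x₀ α)
      (if hsucc : ∃ δ : Ordinal.{u}, δ + 1 = α then
        some (seq W φ x₀ hsucc.choose) else none) :=
  Ordinal.lt_wf.fix_eq _ α

theorem G_mono {α α' : Ordinal.{u}} (h : α ≤ α') : G W φ x₀ α ⊆ G W φ x₀ α' := by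
  intro x hx
  simp only [G, mem_iUnion] at hx ⊢
  obtain ⟨β, hβ, hm⟩ := hx
  exact ⟨β, hβ.trans_le h, hm⟩

theorem subset_G {β α : Ordinal.{u}} (h : β < α) : φ (seq W φ x₀ β) ⊆ G W φ x₀ α := by
  intro x hx
  simp only [G, mem_iUnion]
  exact ⟨β, h, hx⟩

theorem mem_G_iff {a : X} {α : Ordinal.{u}} :
    a ∈ G W φ x₀ α ↔ ∃ β < α, a ∈ φ (seq W φ x₀ β) := by
  simp only [G, mem_iUnion, exists_prop]

theorem seq_not_mem_G {α : Ordinal.{u}} (h : ∃ y, y ∉ G W φ x₀ α) :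
    seq W φ x₀ α ∉ G W φ x₀ α := by
  rw [seq_eq]
  exact step_not_mem h _

theorem succ_inj' {a b : Ordinal.{u}} (h : a + 1 = b + 1) : a = b := by
  rw [Ordinal.add_one_eq_succ, Ordinal.add_one_eq_succ, Order.succ_eq_succ_iff] at h
  exact h

theorem add_two_eq (a : Ordinal.{u}) : a + 2 = (a + 1) + 1 := by
  rw [add_assoc]
  norm_num

open Classical in
/-- The key covering lemma: any point `y` whose neighborhood `φ y` swallows a window
`W (seq δ) m` containing `y` is covered by stage `δ + 2`. -/
theorem key (hdec : ∀ z k, W z (k + 1) ⊆ W z k) (δ : Ordinal.{u}) (m : ℕ) (y : X)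
    (hyW : y ∈ W (seq W φ x₀ δ) m) (hyφ : W (seq W φ x₀ δ) m ⊆ φ y) :
    y ∈ G W φ x₀ (δ + 2) := by
  by_contra hy
  have h12 : δ + 1 ≤ δ + 2 := by
    apply add_le_add_right
    norm_num
  have h12' : δ + 1 < δ + 2 := by
    rw [add_two_eq]
    exact lt_add_one' _
  have hy1 : y ∉ G W φ x₀ (δ + 1) := fun h => hy (G_mono W φ x₀ h12 h)
  have hstep : W (seq W φ x₀ δ) m ⊆
      φ (step W φ x₀ (G W φ x₀ (δ + 1)) (some (seq W φ x₀ δ))) :=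
    step_capture hdec hy1 hyW hyφ
  have hs : seq W φ x₀ (δ + 1) =
      step W φ x₀ (G W φ x₀ (δ + 1)) (some (seq W φ x₀ δ)) := by
    rw [seq_eq]
    have hex : ∃ δ' : Ordinal.{u}, δ' + 1 = δ + 1 := ⟨δ, rfl⟩
    rw [dif_pos hex, succ_inj' hex.choose_spec]
  rw [← hs] at hstep
  exact hy (subset_G W φ x₀ h12' (hstep hyW))

theorem exists_cov (hφm : ∀ x, x ∈ φ x) : ∃ α : Ordinal.{u}, G W φ x₀ α = univ := by
  by_contra hcon
  push_neg at hcon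
  have hun : ∀ α, ∃ y, y ∉ G W φ x₀ α := fun α =>
    (Set.ne_univ_iff_exists_notMem _).mp (hcon α)
  have hni : ∀ α, seq W φ x₀ α ∉ G W φ x₀ α := fun α => seq_not_mem_G W φ x₀ (hun α)
  have hinj : Function.Injective (seq W φ x₀) := by
    intro β γ hbg
    by_contra hne
    rcases lt_or_gt_of_ne hne with hlt | hlt
    · exact hni γ (subset_G W φ x₀ hlt (hbg ▸ hφm (seq W φ x₀ β)))
    · exact hni β (subset_G W φ x₀ hlt (hbg ▸ hφm (seq W φ x₀ γ)))
  exact not_injective_of_ordinal _ hinj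

end Stmt7Aux

theorem stmt7 {X : Type*} [TopologicalSpace X] [T1Space X]
    (h : SatisfiesDecreasingG X) : IsDSpace X := by
  classical
  obtain ⟨W, hWmem, hWdec, hGcond⟩ := h
  intro φ hφo hφm
  rcases isEmpty_or_nonempty X with hX | hX
  · refine ⟨∅, isClosed_empty, ?_, ?_⟩
    · haveI : IsEmpty (↥(∅ : Set X)) := Set.isEmpty_coe_sort.mpr rfl
      infer_instance
    · rw [Set.eq_univ_iff_forall]
      exact fun x => isEmptyElim x
  · obtain ⟨x₀⟩ := hX
    choose Vx hVo hVm hVp using fun a => hGcond a (φ a) (hφo a) (hφm a)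
    obtain hcov := Stmt7Aux.exists_cov W φ x₀ hφm
    set lam := Ordinal.lt_wf.min {α : Ordinal | Stmt7Aux.G W φ x₀ α = univ} hcov with hlamdef
    have hlam : Stmt7Aux.G W φ x₀ lam = univ :=
      Ordinal.lt_wf.min_mem {α : Ordinal | Stmt7Aux.G W φ x₀ α = univ} hcov
    have hlam_min : ∀ β < lam, Stmt7Aux.G W φ x₀ β ≠ univ := by
      intro β hβ hc
      exact Ordinal.lt_wf.not_lt_min {α : Ordinal | Stmt7Aux.G W φ x₀ α = univ} hc hβ
    set D : Set X := Stmt7Aux.seq W φ x₀ '' Set.Iio lam with hDdef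
    have keyCD : ∀ a : X, ∃ O : Set X, IsOpen O ∧ a ∈ O ∧ ∀ e ∈ O ∩ D, e = a := by
      intro a
      have ha : a ∈ Stmt7Aux.G W φ x₀ lam := hlam ▸ mem_univ a
      rw [Stmt7Aux.mem_G_iff] at ha
      obtain ⟨β₁, hβ₁lam, hβ₁mem⟩ := ha
      have hex : {β : Ordinal | a ∈ φ (Stmt7Aux.seq W φ x₀ β)}.Nonempty := ⟨β₁, hβ₁mem⟩
      set β₀ := Ordinal.lt_wf.min _ hex with hβ₀def
      have hβ₀mem : a ∈ φ (Stmt7Aux.seq W φ x₀ β₀) := Ordinal.lt_wf.min_mem _ hex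
      have hβ₀min : ∀ δ, a ∈ φ (Stmt7Aux.seq W φ x₀ δ) → β₀ ≤ δ := fun δ hδ =>
        not_lt.mp (Ordinal.lt_wf.not_lt_min _ hδ)
      have hβ₀lam : β₀ < lam := lt_of_le_of_lt (hβ₀min β₁ hβ₁mem) hβ₁lam
      have haG : a ∉ Stmt7Aux.G W φ x₀ β₀ := by
        rw [Stmt7Aux.mem_G_iff]
        rintro ⟨δ, hδ, hm⟩
        exact absurd (hβ₀min δ hm) (not_le.mpr hδ)
      have hSfin : (Stmt7Aux.seq W φ x₀ '' {δ : Ordinal | δ ≤ β₀ ∧ β₀ < δ + 2}).Finite := by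
        apply Set.Finite.image
        apply Set.Finite.subset
          (Set.Finite.union (Set.finite_singleton β₀)
            (Set.Subsingleton.finite (fun d1 h1 d2 h2 =>
              Stmt7Aux.succ_inj' (h1.trans h2.symm) : {δ : Ordinal | δ + 1 = β₀}.Subsingleton)))
        rintro δ ⟨h1, h2⟩
        rcases eq_or_lt_of_le h1 with heq | hlt
        · exact Or.inl heq
        · refine Or.inr ?_
          have hle1 : δ + 1 ≤ β₀ := by
            rw [Ordinal.add_one_eq_succ]
            exact Order.succ_le_of_lt hlt
          have hle2 : β₀ ≤ δ + 1 := by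
            rw [Stmt7Aux.add_two_eq, Ordinal.add_one_eq_succ, Order.lt_succ_iff] at h2
            exact h2
          exact le_antisymm hle1 hle2
      refine ⟨(φ (Stmt7Aux.seq W φ x₀ β₀) ∩ Vx a) \
          ((Stmt7Aux.seq W φ x₀ '' {δ : Ordinal | δ ≤ β₀ ∧ β₀ < δ + 2}) \ {a}), ?_, ?_, ?_⟩
      · exact ((hφo _).inter (hVo a)).sdiff
          (Set.Finite.isClosed (hSfin.subset Set.diff_subset))
      · exact ⟨⟨hβ₀mem, hVm a⟩, fun hc => hc.2 rfl⟩
      · rintro e ⟨⟨⟨heφ, heV⟩, heS⟩, ⟨γ, hγlam, rfl⟩⟩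
        by_contra hne
        have hγβ : γ ≤ β₀ := by
          by_contra hgt
          push_neg at hgt
          have h1 : φ (Stmt7Aux.seq W φ x₀ β₀) ⊆ Stmt7Aux.G W φ x₀ γ :=
            Stmt7Aux.subset_G W φ x₀ hgt
          have h2 : Stmt7Aux.seq W φ x₀ γ ∉ Stmt7Aux.G W φ x₀ γ :=
            Stmt7Aux.seq_not_mem_G W φ x₀
              ((Set.ne_univ_iff_exists_notMem _).mp (hlam_min γ hγlam))
          exact h2 (h1 heφ)
        obtain ⟨t, hat, htsub⟩ := hVp a _ heV
        have haK : a ∈ Stmt7Aux.G W φ x₀ (γ + 2) :=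
          Stmt7Aux.key W φ x₀ hWdec γ t a hat htsub
        have hβγ2 : β₀ < γ + 2 := by
          by_contra hle
          push_neg at hle
          exact haG (Stmt7Aux.G_mono W φ x₀ hle haK)
        exact heS ⟨⟨γ, ⟨hγβ, hβγ2⟩, rfl⟩, hne⟩
    refine ⟨D, ?_, ?_, ?_⟩
    · rw [← isOpen_compl_iff, isOpen_iff_forall_mem_open]
      intro x hx
      obtain ⟨O, hO, hxO, hsub⟩ := keyCD x
      refine ⟨O, fun e he heD => hx ?_, hO, hxO⟩
      have := hsub e ⟨he, heD⟩
      rwa [← this]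
    · rw [discreteTopology_iff_isOpen_singleton]
      rintro ⟨e, he⟩
      obtain ⟨O, hO, heO, hsub⟩ := keyCD e
      have hset : ({⟨e, he⟩} : Set ↥D) = Subtype.val ⁻¹' O := by
        ext ⟨q, hq⟩
        simp only [mem_singleton_iff, mem_preimage, Subtype.mk.injEq]
        constructor
        · rintro rfl; exact heO
        · intro hqO; exact hsub q ⟨hqO, hq⟩
      rw [hset]
      exact hO.preimage continuous_subtype_val
    · rw [Set.eq_univ_iff_forall]
      intro x
      have hx : x ∈ Stmt7Aux.G W φ x₀ lam := hlam ▸ mem_univ x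
      rw [Stmt7Aux.mem_G_iff] at hx
      obtain ⟨β, hβ, hmem⟩ := hx
      exact Set.mem_biUnion ⟨β, hβ, rfl⟩ hmem
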